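/- Let 1 < p < 2, 0 < q ≤ 1/p, and B = min{n(2-p)(p/(p-1))^{p-1}, 1}. Define v(x,t) = (-t)^{1/(2-p)} (B - |x|^{p/(p-1)}) on Θ = {(x,t): |x| < (-t)^q, -1 < t < 0}. Then ∂_t v - Δ_p v ≥ (n (p/(p-1))^{p-1} - B/(2-p)) (-t)^{(p-1)/(2-p)} ≥ 0 pointwise in Θ (away from x = 0 where v fails to be twice differentiable). -/

import Mathlib

open Real Filter Set

/-- The p-Laplacian `div(|∇u|^{p-2} ∇u)` computed via Fréchet derivatives. -/
noncomputable def pLap (p : ℝ) {n : ℕ} (u : EuclideanSpace ℝ (Fin n) → ℝ)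
    (x : EuclideanSpace ℝ (Fin n)) : ℝ :=
  ∑ i, (inner ℝ (fderiv ℝ (fun y => ‖gradient u y‖ ^ (p - 2) • gradient u y) x
      (EuclideanSpace.single i 1)) (EuclideanSpace.single i (1 : ℝ)) : ℝ)

section aux

variable {n : ℕ}

/-- derivative of `‖·‖ ^ β` (rpow) on a Euclidean space away from 0 -/
lemma aux_hasFDerivAt_norm_rpow (β : ℝ) (y : EuclideanSpace ℝ (Fin n)) (hy : y ≠ 0) :
    HasFDerivAt (fun z : EuclideanSpace ℝ (Fin n) => ‖z‖ ^ β)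
      ((β * ‖y‖ ^ (β - 2)) • innerSL ℝ y) y := by
  have hny : ‖y‖ ≠ 0 := norm_ne_zero_iff.mpr hy
  have h0 : (‖y‖ : ℝ) ^ 2 ≠ 0 := pow_ne_zero _ hny
  have h := ((hasStrictFDerivAt_norm_sq y).hasFDerivAt.rpow_const (p := β / 2)) (Or.inl h0)
  have hfun : (fun z : EuclideanSpace ℝ (Fin n) => (‖z‖ ^ 2 : ℝ) ^ (β / 2))
      = fun z => ‖z‖ ^ β := by
    funext z
    rw [← Real.rpow_natCast ‖z‖ 2, ← Real.rpow_mul (norm_nonneg z)]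
    norm_num
    ring_nf
  rw [hfun] at h
  refine h.congr_fderiv ?_
  have h2 : ((‖y‖ : ℝ) ^ 2 : ℝ) ^ (β / 2 - 1) = ‖y‖ ^ (β - 2) := by
    rw [← Real.rpow_natCast ‖y‖ 2, ← Real.rpow_mul (norm_nonneg y)]
    norm_num
    ring_nf
  ext z
  simp [h2, smul_smul]
  ring

end aux

/-- For `1 < p < 2`, `0 < q ≤ 1/p` and `B = min{n(2-p)(p/(p-1))^{p-1}, 1}`, the function
`v(x,t) = (-t)^{1/(2-p)}(B - |x|^{p/(p-1)})` satisfies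
`∂_t v - Δ_p v ≥ (n(p/(p-1))^{p-1} - B/(2-p))(-t)^{(p-1)/(2-p)} ≥ 0` in `Θ ∩ {x ≠ 0}`. -/
theorem traditional_barrier_supersolution (p q : ℝ) (hp1 : 1 < p) (hp2 : p < 2)
    (hq0 : 0 < q) (hq : q ≤ 1 / p) (n : ℕ) (hn : 1 ≤ n) (B : ℝ)
    (hB : B = min (n * (2 - p) * (p / (p - 1)) ^ (p - 1)) 1)
    (Θ : Set (EuclideanSpace ℝ (Fin n) × ℝ))
    (hΘ : Θ = {z : EuclideanSpace ℝ (Fin n) × ℝ |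
      ‖z.1‖ < (-z.2) ^ q ∧ -1 < z.2 ∧ z.2 < 0})
    (v : EuclideanSpace ℝ (Fin n) → ℝ → ℝ)
    (hv : ∀ x t, v x t = (-t) ^ (1 / (2 - p)) * (B - ‖x‖ ^ (p / (p - 1))))
    (x : EuclideanSpace ℝ (Fin n)) (t : ℝ) (hmem : (x, t) ∈ Θ) (hx : x ≠ 0) :
    deriv (v x) t - pLap p (fun y => v y t) x ≥
      (n * (p / (p - 1)) ^ (p - 1) - B / (2 - p)) * (-t) ^ ((p - 1) / (2 - p)) ∧
    (n * (p / (p - 1)) ^ (p - 1) - B / (2 - p)) * (-t) ^ ((p - 1) / (2 - p)) ≥ 0 := by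
  have hp1' : (0:ℝ) < p - 1 := by linarith
  have h2p : (0:ℝ) < 2 - p := by linarith
  have ht : t < 0 := by
    rw [hΘ] at hmem; exact hmem.2.2
  have ht' : (0:ℝ) < -t := by linarith
  set β : ℝ := p / (p - 1) with hβdef
  have hβ : 0 < β := div_pos (by linarith) hp1'
  set α : ℝ := 1 / (2 - p) with hαdef
  have hα : 0 < α := by positivity
  set c1 : ℝ := (-t) ^ α with hc1def
  have hc1 : 0 < c1 := Real.rpow_pos_of_pos ht' α
  set E : ℝ := (-t) ^ ((p - 1) / (2 - p)) with hEdef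
  have hE : 0 < E := Real.rpow_pos_of_pos ht' _
  set k : ℝ := -(E * β ^ (p - 1)) with hkdef
  have hβp : (0:ℝ) < β ^ (p - 1) := Real.rpow_pos_of_pos hβ _
  -- gradient of the spatial function
  have hgradeq : ∀ y : EuclideanSpace ℝ (Fin n), y ≠ 0 →
      gradient (fun z => v z t) y = (-(c1 * β * ‖y‖ ^ (β - 2))) • y := by
    intro y hy
    have h1 := aux_hasFDerivAt_norm_rpow β y hy
    have h2 := (h1.const_mul c1).const_sub (c1 * B)
    have hfun : (fun z : EuclideanSpace ℝ (Fin n) => v z t)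
        = fun z => c1 * B - c1 * ‖z‖ ^ β := by
      funext z; rw [hv]; ring
    rw [hfun]
    apply HasGradientAt.gradient
    rw [hasGradientAt_iff_hasFDerivAt]
    have hclm : (InnerProductSpace.toDual ℝ (EuclideanSpace ℝ (Fin n)))
        ((-(c1 * β * ‖y‖ ^ (β - 2))) • y)
        = -(c1 • (β * ‖y‖ ^ (β - 2)) • innerSL ℝ y) := by
      ext z
      simp only [InnerProductSpace.toDual_apply_apply, ContinuousLinearMap.neg_apply,
        ContinuousLinearMap.coe_smul', Pi.smul_apply, innerSL_apply_apply, smul_eq_mul]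
      rw [real_inner_smul_left]
      ring
    rw [hclm]
    exact h2
  -- the vector field `|∇u|^{p-2} ∇u` equals `k • y` away from 0
  have hfield : ∀ y : EuclideanSpace ℝ (Fin n), y ≠ 0 →
      ‖gradient (fun z => v z t) y‖ ^ (p - 2) • gradient (fun z => v z t) y = k • y := by
    intro y hy
    have hny : (0:ℝ) < ‖y‖ := norm_pos_iff.mpr hy
    rw [hgradeq y hy]
    rw [smul_smul]
    congr 1
    have hnorm : ‖(-(c1 * β * ‖y‖ ^ (β - 2))) • y‖ = c1 * β * ‖y‖ ^ (β - 1) := by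
      rw [norm_smul]
      have : |(-(c1 * β * ‖y‖ ^ (β - 2)))| = c1 * β * ‖y‖ ^ (β - 2) := by
        rw [abs_neg, abs_of_pos]; positivity
      rw [Real.norm_eq_abs, this]
      rw [mul_assoc, mul_assoc, ← Real.rpow_add_one hny.ne']
      ring_nf
    rw [hnorm]
    have e1 : (c1 * β * ‖y‖ ^ (β - 1)) ^ (p - 2)
        = c1 ^ (p - 2) * β ^ (p - 2) * ‖y‖ ^ ((β - 1) * (p - 2)) := by
      rw [Real.mul_rpow (by positivity) (by positivity),
        Real.mul_rpow (by positivity) (by positivity),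
        ← Real.rpow_mul hny.le]
    rw [e1]
    have e2 : c1 ^ (p - 2) * β ^ (p - 2) * ‖y‖ ^ ((β - 1) * (p - 2)) *
        -(c1 * β * ‖y‖ ^ (β - 2))
        = -(c1 ^ (p - 1) * β ^ (p - 1) * ‖y‖ ^ ((β - 1) * (p - 2) + (β - 2))) := by
      rw [Real.rpow_add hny, show p - 1 = p - 2 + 1 from by ring,
        Real.rpow_add_one hc1.ne', Real.rpow_add_one hβ.ne']
      ring
    rw [e2]
    have e3 : (β - 1) * (p - 2) + (β - 2) = 0 := by
      rw [hβdef]; field_simp; ring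
    have e4 : c1 ^ (p - 1) = E := by
      rw [hc1def, hEdef, ← Real.rpow_mul ht'.le]
      congr 1
      rw [hαdef]; field_simp
    rw [e3, e4, Real.rpow_zero, hkdef]
    ring
  -- compute pLap
  have hopen : {y : EuclideanSpace ℝ (Fin n) | y ≠ 0} ∈ nhds x :=
    (isOpen_compl_singleton).mem_nhds hx
  have heq : (fun y => ‖gradient (fun z => v z t) y‖ ^ (p - 2) • gradient (fun z => v z t) y)
      =ᶠ[nhds x] fun y => k • y := by
    filter_upwards [hopen] with y hy
    exact hfield y hy
  have hlin : HasFDerivAt (fun y : EuclideanSpace ℝ (Fin n) => k • y)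
      (k • ContinuousLinearMap.id ℝ (EuclideanSpace ℝ (Fin n))) x :=
    (hasFDerivAt_id x).const_smul k
  have hfderiv : fderiv ℝ
      (fun y => ‖gradient (fun z => v z t) y‖ ^ (p - 2) • gradient (fun z => v z t) y) x
      = k • ContinuousLinearMap.id ℝ (EuclideanSpace ℝ (Fin n)) := by
    rw [heq.fderiv_eq, hlin.fderiv]
  have hpLap : pLap p (fun y => v y t) x = n * k := by
    rw [pLap]
    have : ∀ i : Fin n,
        (inner ℝ (fderiv ℝ (fun y => ‖gradient (fun z => v z t) y‖ ^ (p - 2) •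
            gradient (fun z => v z t) y) x (EuclideanSpace.single i 1))
          (EuclideanSpace.single i (1 : ℝ)) : ℝ) = k := by
      intro i
      rw [hfderiv]
      simp [real_inner_smul_left, EuclideanSpace.inner_single_left,
        EuclideanSpace.single_apply]
    rw [Finset.sum_congr rfl fun i _ => this i]
    simp [mul_comm]
  -- compute the time derivative
  have hderiv : deriv (v x) t = -(α * E) * (B - ‖x‖ ^ β) := by
    have hfun : v x = fun s => (-s) ^ α * (B - ‖x‖ ^ β) := by
      funext s; rw [hv]
    rw [hfun]
    have hneg : HasDerivAt (fun s : ℝ => -s) (-1) t := (hasDerivAt_id t).neg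
    have h1 := (hneg.rpow_const (p := α) (Or.inl (by exact ht'.ne')))
    have h2 := h1.mul_const (B - ‖x‖ ^ β)
    rw [h2.deriv]
    have : (-t) ^ (α - 1) = E := by
      rw [hEdef]
      congr 1
      rw [hαdef]; field_simp; ring
    rw [this]; ring
  have hxnorm : (0:ℝ) ≤ ‖x‖ ^ β := Real.rpow_nonneg (norm_nonneg x) β
  have hBle : B ≤ n * (2 - p) * β ^ (p - 1) := by
    rw [hB]; exact min_le_left _ _
  have hn1 : (1:ℝ) ≤ n := by exact_mod_cast hn
  constructor
  · rw [hderiv, hpLap, hkdef]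
    have key : -(α * E) * (B - ‖x‖ ^ β) - ↑n * -(E * β ^ (p - 1))
        - (↑n * β ^ (p - 1) - B / (2 - p)) * E = E * ‖x‖ ^ β / (2 - p) := by
      rw [hαdef]
      field_simp
      ring
    have hpos : 0 ≤ E * ‖x‖ ^ β / (2 - p) := by positivity
    linarith
  · apply mul_nonneg _ hE.le
    have : B / (2 - p) ≤ n * β ^ (p - 1) := by
      rw [div_le_iff₀ h2p]
      nlinarith
    linarith
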